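/- Let α ∈ (0,2). Then for every x ∈ ℝ², ∫_{ℝ²} |x−y|^{−α} (1+|y|²)^{−(4−α)/2} dy = (2π/(2−α)) (1+|x|²)^{−α/2}. Equivalently, with U(x) := ((4−α)/2)·log(C_α/(1+|x|²)) and C_α := ((2−α)(4−α)/π)^{1/(4−α)}, one has ∫_{ℝ²} e^{U(y)}|x−y|^{−α} dy = (2(4−α)/C_α²) e^{αU(x)/(4−α)}. -/

import Mathlib

open MeasureTheory Real Set Filter Topology


open MeasureTheory Real Set Filter Topology

lemma radial_integral (α : ℝ) (hα : 0 < α) (hα' : α < 2) :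
    ∫ r in Ioi (0:ℝ), r * (r ^ (-α) * (1 + r ^ 2) ^ (-((4 - α) / 2))) = 1 / (2 - α) := by
  have h2α : (0:ℝ) < 2 - α := by linarith
  set p : ℝ := (2 - α) / 2 with hp
  have hppos : 0 < p := by positivity
  set f : ℝ → ℝ := fun r => r ^ 2 / (1 + r ^ 2) with hf
  set g : ℝ → ℝ := fun r => (1 / (2 - α)) * f r ^ p with hg
  have hden : ∀ r : ℝ, (0:ℝ) < 1 + r ^ 2 := fun r => by positivity
  have hfderiv : ∀ r : ℝ, HasDerivAt f (2 * r / (1 + r ^ 2) ^ 2) r := by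
    intro r
    have h1 : HasDerivAt (fun r : ℝ => r ^ 2) (2 * r) r := by
      simpa using hasDerivAt_pow 2 r
    have h2 : HasDerivAt (fun r : ℝ => 1 + r ^ 2) (2 * r) r := by
      simpa using h1.const_add 1
    have := h1.div h2 (hden r).ne'
    refine this.congr_deriv ?_
    field_simp
    ring
  have hgderiv : ∀ r ∈ Ioi (0:ℝ),
      HasDerivAt g (r * (r ^ (-α) * (1 + r ^ 2) ^ (-((4 - α) / 2)))) r := by
    intro r hr
    have hr0 : (0:ℝ) < r := hr
    have hfne : f r ≠ 0 := by
      simp only [hf]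
      positivity
    have := ((hfderiv r).rpow_const (p := p) (Or.inl hfne)).const_mul (1 / (2 - α))
    refine this.congr_deriv ?_
    have hfpow : f r ^ (p - 1) = r ^ (-α) * (1 + r ^ 2) ^ (α / 2) := by
      have hnum : ((r:ℝ) ^ 2) ^ (p - 1) = r ^ (-α) := by
        rw [← Real.rpow_natCast r 2, ← Real.rpow_mul hr0.le,
          show ((2:ℕ):ℝ) * (p - 1) = -α by push_cast [hp]; ring]
      have hden' : ((1 + r ^ 2 :ℝ)) ^ (p - 1) = ((1 + r ^ 2) ^ (α / 2))⁻¹ := by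
        rw [← Real.rpow_neg (hden r).le, hp]
        norm_num
        ring_nf
      rw [hf]
      simp only
      rw [div_rpow (by positivity) (hden r).le, hnum, hden', div_eq_mul_inv, inv_inv]
    rw [hfpow]
    obtain ⟨s, hs0, hs⟩ : ∃ s : ℝ, 0 < s ∧ 1 + r ^ 2 = s := ⟨1 + r ^ 2, hden r, rfl⟩
    rw [hs]
    rw [show s ^ (-((4 - α) / 2)) = s ^ (α/2) * ((s^2)⁻¹) by
      rw [show ((s:ℝ)^2)⁻¹ = s ^ (-(2:ℝ)) by
        rw [← Real.rpow_natCast s 2, ← Real.rpow_neg hs0.le]; norm_num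
      , ← Real.rpow_add hs0]
      ring_nf]
    rw [hp]
    field_simp
  have hcont : ContinuousWithinAt g (Ici (0:ℝ)) 0 := by
    apply ContinuousAt.continuousWithinAt
    apply ContinuousAt.mul continuousAt_const
    exact (Real.continuousAt_rpow_const _ _ (Or.inr hppos.le)).comp
      ((hfderiv 0).differentiableAt).continuousAt
  have hgpos : ∀ r ∈ Ioi (0:ℝ), 0 ≤ r * (r ^ (-α) * (1 + r ^ 2) ^ (-((4 - α) / 2))) := by
    intro r hr
    have hr0 : (0:ℝ) < r := hr
    positivity
  have hftend : Tendsto f atTop (𝓝 1) := by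
    have h1 : Tendsto (fun r : ℝ => (1 + r ^ 2)⁻¹) atTop (𝓝 0) := by
      apply Tendsto.inv_tendsto_atTop
      exact tendsto_atTop_add_const_left _ 1 (tendsto_pow_atTop (by norm_num))
    have h2 : Tendsto (fun r : ℝ => 1 - (1 + r ^ 2)⁻¹) atTop (𝓝 1) := by
      simpa using (tendsto_const_nhds (x := (1:ℝ))).sub h1
    apply h2.congr'
    filter_upwards [eventually_gt_atTop (0:ℝ)] with r hr
    rw [hf]
    field_simp
    ring
  have hgtend : Tendsto g atTop (𝓝 (1 / (2 - α))) := by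
    have h1 : Tendsto (fun r => f r ^ p) atTop (𝓝 (1 ^ p)) := by
      apply (Real.continuousAt_rpow_const 1 p (Or.inl one_ne_zero)).tendsto.comp hftend
    rw [Real.one_rpow] at h1
    have := h1.const_mul (1 / (2 - α))
    simpa [hg, one_div] using this
  have := integral_Ioi_of_hasDerivAt_of_nonneg hcont hgderiv hgpos hgtend
  rw [this]
  have : g 0 = 0 := by
    simp [hg, hf, Real.zero_rpow hppos.ne']
  rw [this, sub_zero]


open MeasureTheory Real Set Filter Topology

lemma det_complex_smul_one (c : ℂ) : (c • (1 : ℂ →L[ℝ] ℂ)).det = Complex.normSq c := by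
  have h : (c • (1 : ℂ →L[ℝ] ℂ)).toLinearMap = Algebra.lmul ℝ ℂ c := by
    ext z; simp [mul_comm]
  show LinearMap.det _ = _
  rw [h, ← Algebra.norm_apply, Algebra.norm_complex_apply]

lemma normSq_eq_norm_sq (z : ℂ) : Complex.normSq z = ‖z‖ ^ 2 := by
  rw [Complex.normSq_eq_norm_sq]

-- the key algebraic identity
lemma key_identity (x w : ℂ) :
    Complex.normSq (1 - (starRingEnd ℂ) x * w) + Complex.normSq (w + x)
      = (1 + ‖x‖ ^ 2) * (1 + ‖w‖ ^ 2) := by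
  rw [← normSq_eq_norm_sq, ← normSq_eq_norm_sq]
  simp only [Complex.normSq_apply, Complex.sub_re, Complex.sub_im, Complex.add_re,
    Complex.add_im, Complex.mul_re, Complex.mul_im, Complex.one_re, Complex.one_im,
    Complex.conj_re, Complex.conj_im]
  ring


lemma rpow_identity (α A B m : ℝ) (hA : 0 < A) (hB : 0 < B) (hm : 0 < m) :
    (A / m ^ 2) ^ 2 * ((A / m) ^ (-α) * (A * B / m ^ 2) ^ (-((4 - α) / 2)))
      = A ^ (-(α / 2)) * B ^ (-((4 - α) / 2)) := by
  have hm2 : (0:ℝ) < m ^ 2 := by positivity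
  have hAm : (0:ℝ) < A / m := by positivity
  have hAm2 : (0:ℝ) < A / m ^ 2 := by positivity
  have hAB : (0:ℝ) < A * B / m ^ 2 := by positivity
  have h1 : (0:ℝ) < (A / m ^ 2) ^ 2 * ((A / m) ^ (-α) * (A * B / m ^ 2) ^ (-((4 - α) / 2))) := by
    positivity
  have h2 : (0:ℝ) < A ^ (-(α / 2)) * B ^ (-((4 - α) / 2)) := by positivity
  rw [← Real.exp_log h1, ← Real.exp_log h2]
  congr 1
  rw [Real.log_mul (by positivity) (by positivity),
    Real.log_mul (by positivity) (by positivity),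
    Real.log_mul (by positivity) (by positivity),
    Real.log_pow, Real.log_rpow hAm, Real.log_rpow hAB, Real.log_rpow hA,
    Real.log_rpow hB, Real.log_div hA.ne' hm.ne', Real.log_div hA.ne' hm2.ne',
    Real.log_div (by positivity) hm2.ne', Real.log_mul hA.ne' hB.ne', Real.log_pow]
  push_cast
  ring

lemma cov (α : ℝ) (hα : 0 < α) (hα' : α < 2) (x : ℂ) :
    ∫ y : ℂ, ‖x - y‖ ^ (-α) * (1 + ‖y‖ ^ 2) ^ (-((4 - α) / 2))
      = (1 + ‖x‖ ^ 2) ^ (-(α / 2))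
        * ∫ w : ℂ, ‖w‖ ^ (-α) * (1 + ‖w‖ ^ 2) ^ (-((4 - α) / 2)) := by
  classical
  set c : ℂ := (starRingEnd ℂ) x with hc
  set s : Set ℂ := {w : ℂ | 1 - c * w ≠ 0} with hs
  set t : Set ℂ := {y : ℂ | 1 + c * y ≠ 0} with ht
  have hA : (0:ℝ) < 1 + ‖x‖ ^ 2 := by positivity
  have hAc : (1 : ℂ) + c * x ≠ 0 := by
    rw [hc, mul_comm, Complex.mul_conj, ← Complex.ofReal_one, ← Complex.ofReal_add]
    rw [Complex.ofReal_ne_zero, normSq_eq_norm_sq]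
    positivity
  have hAc' : ((1:ℂ) + c * x) = ((1 + ‖x‖^2 : ℝ) : ℂ) := by
    rw [hc, mul_comm, Complex.mul_conj, normSq_eq_norm_sq]
    push_cast
    ring
  -- s, t are open with subsingleton complement
  have hsopen : IsOpen s := isOpen_compl_iff.mpr (isClosed_eq (by fun_prop) continuous_const)
  have htopen : IsOpen t := isOpen_compl_iff.mpr (isClosed_eq (by fun_prop) continuous_const)
  have hsc : sᶜ.Subsingleton := by
    intro a ha b hb
    simp only [hs, mem_compl_iff, mem_setOf_eq, not_not, sub_eq_zero] at ha hb
    have hc0 : c ≠ 0 := by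
      intro h; rw [h, zero_mul] at ha; exact one_ne_zero ha
    have := ha.symm.trans hb
    exact mul_left_cancel₀ hc0 this
  have htc : tᶜ.Subsingleton := by
    intro a ha b hb
    simp only [ht, mem_compl_iff, mem_setOf_eq, not_not] at ha hb
    have hc0 : c ≠ 0 := by
      intro h; rw [h, zero_mul, add_zero] at ha; exact one_ne_zero ha
    have := ha.trans hb.symm
    exact mul_left_cancel₀ hc0 (add_left_cancel this)
  have hsnull : volume sᶜ = 0 := hsc.measure_zero _
  have htnull : volume tᶜ = 0 := htc.measure_zero _
  have hsrestrict : volume.restrict s = volume := by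
    rw [Measure.restrict_eq_self_of_ae_mem]
    exact (ae_iff.mpr (by exact hsnull))
  have htrestrict : volume.restrict t = volume := by
    rw [Measure.restrict_eq_self_of_ae_mem]
    exact (ae_iff.mpr (by exact htnull))
  -- the map
  set ψ : ℂ → ℂ := fun w => (w + x) / (1 - c * w) with hψ
  set D : ℂ → ℂ := fun w => (1 + c * x) / (1 - c * w) ^ 2 with hD
  have hψderiv : ∀ w ∈ s, HasDerivAt ψ (D w) w := by
    intro w hw
    have hd : 1 - c * w ≠ 0 := hw
    have h1 : HasDerivAt (fun w : ℂ => w + x) 1 w := by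
      simpa using (hasDerivAt_id w).add_const x
    have h2 : HasDerivAt (fun w : ℂ => 1 - c * w) (-c) w := by
      simpa using ((hasDerivAt_id w).const_mul c).const_sub 1
    have := h1.div h2 hd
    refine this.congr_deriv ?_
    rw [hD]
    field_simp
    ring
  -- injectivity
  have hinj : InjOn ψ s := by
    intro w1 hw1 w2 hw2 h
    have hd1 : 1 - c * w1 ≠ 0 := hw1
    have hd2 : 1 - c * w2 ≠ 0 := hw2
    rw [hψ] at h
    simp only at h
    rw [div_eq_div_iff hd1 hd2] at h
    have h2 : (w1 - w2) * (1 + c * x) = 0 := by ring_nf; ring_nf at h; linear_combination h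
    rcases mul_eq_zero.mp h2 with h3 | h3
    · exact sub_eq_zero.mp h3
    · exact absurd h3 hAc
  -- image
  have himage : ψ '' s = t := by
    apply Subset.antisymm
    · rintro _ ⟨w, hw, rfl⟩
      have hd : 1 - c * w ≠ 0 := hw
      show 1 + c * ((w + x) / (1 - c * w)) ≠ 0
      have heq : 1 + c * ((w + x) / (1 - c * w)) = (1 + c * x) / (1 - c * w) := by
        field_simp
        ring
      rw [heq]
      exact div_ne_zero hAc hd
    · rintro y hy
      have hd : 1 + c * y ≠ 0 := hy
      have hdenom : 1 - c * ((y - x) / (1 + c * y)) = (1 + c * x) / (1 + c * y) := by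
        field_simp
        ring
      have hnum : (y - x) / (1 + c * y) + x = (y * (1 + c * x)) / (1 + c * y) := by
        rw [eq_div_iff hd, add_mul, div_mul_cancel₀ _ hd]; ring
      refine ⟨(y - x) / (1 + c * y), ?_, ?_⟩
      · show 1 - c * ((y - x) / (1 + c * y)) ≠ 0
        rw [hdenom]
        exact div_ne_zero hAc hd
      · show ((y - x) / (1 + c * y) + x) / (1 - c * ((y - x) / (1 + c * y))) = y
        rw [hdenom, hnum, div_div_div_eq]
        rw [div_eq_iff (mul_ne_zero hd hAc)]
        ring
  -- the change of variables
  have hmeas : MeasurableSet s := hsopen.measurableSet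
  have hfderiv : ∀ w ∈ s, HasFDerivWithinAt ψ ((D w) • (1 : ℂ →L[ℝ] ℂ)) s w :=
    fun w hw => ((hψderiv w hw).complexToReal_fderiv).hasFDerivWithinAt
  have hchange := integral_image_eq_integral_abs_det_fderiv_smul volume hmeas hfderiv hinj
    (fun y => ‖x - y‖ ^ (-α) * (1 + ‖y‖ ^ 2) ^ (-((4 - α) / 2)))
  rw [himage] at hchange
  have hpt : ∀ w ∈ s,
      |((D w • (1 : ℂ →L[ℝ] ℂ)).det)| •
          (‖x - ψ w‖ ^ (-α) * (1 + ‖ψ w‖ ^ 2) ^ (-((4 - α) / 2)))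
        = (1 + ‖x‖ ^ 2) ^ (-(α / 2)) * (‖w‖ ^ (-α) * (1 + ‖w‖ ^ 2) ^ (-((4 - α) / 2))) := by
    intro w hw
    have hd : 1 - c * w ≠ 0 := hw
    have hm : (0:ℝ) < ‖1 - c * w‖ := norm_pos_iff.mpr hd
    have hB : (0:ℝ) < 1 + ‖w‖ ^ 2 := by positivity
    -- the determinant
    have hdet : |((D w • (1 : ℂ →L[ℝ] ℂ)).det)| = (‖D w‖) ^ 2 := by
      rw [det_complex_smul_one, abs_of_nonneg (Complex.normSq_nonneg _), normSq_eq_norm_sq]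
    have hDnorm : ‖D w‖ = (1 + ‖x‖ ^ 2) / ‖1 - c * w‖ ^ 2 := by
      rw [hD]
      simp only
      rw [hAc', norm_div, norm_pow, Complex.norm_real, Real.norm_of_nonneg hA.le]
    -- the distance
    have hsub : x - ψ w = -(w * (1 + c * x)) / (1 - c * w) := by
      rw [hψ]
      simp only
      rw [eq_div_iff hd, sub_mul, div_mul_cancel₀ _ hd]; ring
    have hsubnorm : ‖x - ψ w‖ = ‖w‖ * ((1 + ‖x‖ ^ 2) / ‖1 - c * w‖) := by
      rw [hsub, norm_div, norm_neg, norm_mul, hAc', Complex.norm_real,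
        Real.norm_of_nonneg hA.le, mul_div_assoc]
    -- the conformal factor
    have hconf : 1 + ‖ψ w‖ ^ 2
        = (1 + ‖x‖ ^ 2) * (1 + ‖w‖ ^ 2) / ‖1 - c * w‖ ^ 2 := by
      have h1 : ‖ψ w‖ ^ 2 = Complex.normSq (w + x) / ‖1 - c * w‖ ^ 2 := by
        rw [← normSq_eq_norm_sq, hψ]
        simp only
        rw [map_div₀, normSq_eq_norm_sq (1 - c * w)]
      have h2 : Complex.normSq (w + x)
          = (1 + ‖x‖ ^ 2) * (1 + ‖w‖ ^ 2) - ‖1 - c * w‖ ^ 2 := by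
        have h3 := key_identity x w
        rw [← hc, normSq_eq_norm_sq (1 - c * w)] at h3
        linarith
      rw [h1, h2]
      rw [add_div' _ _ _ (by positivity : (‖1 - c * w‖:ℝ) ^ 2 ≠ 0)]
      congr 1
      ring
    rw [hdet, hDnorm, hsubnorm, hconf, smul_eq_mul]
    rw [Real.mul_rpow (norm_nonneg w) (by positivity)]
    rw [show ∀ a b c : ℝ, a * (‖w‖ ^ (-α) * b * c) = ‖w‖ ^ (-α) * (a * (b * c)) from
      fun a b c => by ring]
    rw [rpow_identity α (1 + ‖x‖ ^ 2) (1 + ‖w‖ ^ 2) (‖1 - c * w‖) hA hB hm]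
    ring
  calc ∫ y : ℂ, ‖x - y‖ ^ (-α) * (1 + ‖y‖ ^ 2) ^ (-((4 - α) / 2))
      = ∫ y in t, ‖x - y‖ ^ (-α) * (1 + ‖y‖ ^ 2) ^ (-((4 - α) / 2)) := by rw [htrestrict]
    _ = ∫ w in s, |((D w • (1 : ℂ →L[ℝ] ℂ)).det)| •
          (‖x - ψ w‖ ^ (-α) * (1 + ‖ψ w‖ ^ 2) ^ (-((4 - α) / 2))) := hchange
    _ = ∫ w in s, (1 + ‖x‖ ^ 2) ^ (-(α / 2))
          * (‖w‖ ^ (-α) * (1 + ‖w‖ ^ 2) ^ (-((4 - α) / 2))) := by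
        exact setIntegral_congr_fun hmeas hpt
    _ = (1 + ‖x‖ ^ 2) ^ (-(α / 2))
          * ∫ w : ℂ, ‖w‖ ^ (-α) * (1 + ‖w‖ ^ 2) ^ (-((4 - α) / 2)) := by
        rw [hsrestrict, integral_const_mul]


open MeasureTheory Real Set Filter Topology


lemma base_integral (α : ℝ) (hα : 0 < α) (hα' : α < 2) :
    ∫ y : ℂ, ‖y‖ ^ (-α) * (1 + ‖y‖ ^ 2) ^ (-((4 - α) / 2))
      = 2 * π / (2 - α) := by
  have := MeasureTheory.integral_fun_norm_addHaar (volume : Measure ℂ)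
    (fun r : ℝ => r ^ (-α) * (1 + r ^ 2) ^ (-((4 - α) / 2)))
  rw [this, Complex.finrank_real_complex, measureReal_def, Complex.volume_ball]
  have heq : ∫ y in Ioi (0:ℝ),
        y ^ (2-1) • ((fun r : ℝ => r ^ (-α) * (1 + r ^ 2) ^ (-((4 - α) / 2))) y)
      = ∫ r in Ioi (0:ℝ), r * (r ^ (-α) * (1 + r ^ 2) ^ (-((4 - α) / 2))) := by
    apply setIntegral_congr_fun measurableSet_Ioi
    intro r _
    simp [smul_eq_mul]
  rw [heq, radial_integral α hα hα']
  have hπ : ((ENNReal.ofReal 1 ^ 2 * NNReal.pi).toReal) = π := by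
    simp [ENNReal.toReal_mul]
  rw [hπ]
  simp only [nsmul_eq_mul, smul_eq_mul, Nat.cast_ofNat]
  ring


open MeasureTheory Real Set Filter Topology



lemma complex_main (α : ℝ) (hα : 0 < α) (hα' : α < 2) (x : ℂ) :
    ∫ y : ℂ, ‖x - y‖ ^ (-α) * (1 + ‖y‖ ^ 2) ^ (-((4 - α) / 2))
      = 2 * π / (2 - α) * (1 + ‖x‖ ^ 2) ^ (-(α / 2)) := by
  rw [cov α hα hα' x, base_integral α hα hα']
  ring

lemma euclidean_main (α : ℝ) (hα : 0 < α) (hα' : α < 2) (x : EuclideanSpace ℝ (Fin 2)) :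
    (∫ y : EuclideanSpace ℝ (Fin 2), 1 / ‖x - y‖ ^ α * (1 + ‖y‖ ^ 2) ^ (-((4 - α) / 2)))
      = 2 * Real.pi / (2 - α) * (1 + ‖x‖ ^ 2) ^ (-(α / 2)) := by
  set b := Complex.orthonormalBasisOneI
  have hmp : MeasurePreserving b.repr volume volume := b.measurePreserving_repr
  have hme : MeasurableEmbedding b.repr :=
    b.repr.toHomeomorph.measurableEmbedding
  have h := hmp.integral_comp hme
    (fun y : EuclideanSpace ℝ (Fin 2) => 1 / ‖x - y‖ ^ α * (1 + ‖y‖ ^ 2) ^ (-((4 - α) / 2)))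
  rw [← h]
  have heq : ∀ z : ℂ,
      1 / ‖x - b.repr z‖ ^ α * (1 + ‖b.repr z‖ ^ 2) ^ (-((4 - α) / 2))
        = ‖b.repr.symm x - z‖ ^ (-α) * (1 + ‖z‖ ^ 2) ^ (-((4 - α) / 2)) := by
    intro z
    have h1 : ‖x - b.repr z‖ = ‖b.repr.symm x - z‖ := by
      rw [show x - b.repr z = b.repr (b.repr.symm x - z) by
        rw [map_sub, LinearIsometryEquiv.apply_symm_apply]]
      exact b.repr.norm_map _
    have h2 : ‖b.repr z‖ = ‖z‖ := b.repr.norm_map z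
    rw [h1, h2, Real.rpow_neg (norm_nonneg _), one_div]
  rw [integral_congr_ae (Filter.Eventually.of_forall heq)]
  rw [complex_main α hα hα']
  rw [b.repr.symm.norm_map x]


open MeasureTheory Real

noncomputable def Ca (α : ℝ) : ℝ := ((2 - α) * (4 - α) / Real.pi) ^ ((1 : ℝ) / (4 - α))

noncomputable def U (α : ℝ) (x : EuclideanSpace ℝ (Fin 2)) : ℝ :=
  ((4 - α) / 2) * Real.log (Ca α / (1 + ‖x‖ ^ 2))


theorem convolution_identity (α : ℝ) (hα : 0 < α) (hα' : α < 2) :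
    (∀ x : EuclideanSpace ℝ (Fin 2),
      (∫ y, 1 / ‖x - y‖ ^ α * (1 + ‖y‖ ^ 2) ^ (-((4 - α) / 2)))
        = 2 * Real.pi / (2 - α) * (1 + ‖x‖ ^ 2) ^ (-(α / 2))) ∧
    (∀ x : EuclideanSpace ℝ (Fin 2),
      (∫ y, Real.exp (U α y) / ‖x - y‖ ^ α)
        = 2 * (4 - α) / Ca α ^ 2 * Real.exp (α * U α x / (4 - α))) := by
  have h4α : (0:ℝ) < 4 - α := by linarith
  have h2α : (0:ℝ) < 2 - α := by linarith
  have hKpos : (0:ℝ) < (2 - α) * (4 - α) / Real.pi := by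
    have := Real.pi_pos
    positivity
  have hCa : (0:ℝ) < Ca α := Real.rpow_pos_of_pos hKpos _
  have hCapow : Ca α ^ ((4:ℝ) - α) = (2 - α) * (4 - α) / Real.pi := by
    rw [Ca, ← Real.rpow_mul hKpos.le, one_div, inv_mul_cancel₀ h4α.ne', Real.rpow_one]
  refine ⟨fun x => euclidean_main α hα hα' x, fun x => ?_⟩
  -- pointwise rewriting of exp (U α y)
  have hexpU : ∀ y : EuclideanSpace ℝ (Fin 2),
      Real.exp (U α y) = Ca α ^ ((4 - α) / 2) * (1 + ‖y‖ ^ 2) ^ (-((4 - α) / 2)) := by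
    intro y
    have hpos : (0:ℝ) < 1 + ‖y‖ ^ 2 := by positivity
    have hb : (0:ℝ) < Ca α / (1 + ‖y‖ ^ 2) := by positivity
    rw [U, show ((4 - α) / 2) * Real.log (Ca α / (1 + ‖y‖ ^ 2))
        = Real.log (Ca α / (1 + ‖y‖ ^ 2)) * ((4 - α) / 2) from mul_comm _ _,
      ← Real.rpow_def_of_pos hb]
    rw [Real.div_rpow hCa.le hpos.le, Real.rpow_neg hpos.le, div_eq_mul_inv]
  have hstep1 : (∫ y : EuclideanSpace ℝ (Fin 2), Real.exp (U α y) / ‖x - y‖ ^ α)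
      = Ca α ^ ((4 - α) / 2)
        * ∫ y : EuclideanSpace ℝ (Fin 2), 1 / ‖x - y‖ ^ α * (1 + ‖y‖ ^ 2) ^ (-((4 - α) / 2)) := by
    rw [← integral_const_mul]
    apply integral_congr_ae
    apply Filter.Eventually.of_forall
    intro y
    beta_reduce
    rw [hexpU y]
    rw [div_eq_mul_inv, ← one_div]
    ring
  rw [hstep1, euclidean_main α hα hα' x]
  -- RHS
  have hexpUx : Real.exp (α * U α x / (4 - α))
      = Ca α ^ (α / 2) * (1 + ‖x‖ ^ 2) ^ (-(α / 2)) := by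
    have hpos : (0:ℝ) < 1 + ‖x‖ ^ 2 := by positivity
    have hb : (0:ℝ) < Ca α / (1 + ‖x‖ ^ 2) := by positivity
    have heq : α * U α x / (4 - α) = Real.log (Ca α / (1 + ‖x‖ ^ 2)) * (α / 2) := by
      rw [U]; field_simp
    rw [heq, ← Real.rpow_def_of_pos hb,
      Real.div_rpow hCa.le hpos.le, Real.rpow_neg hpos.le, div_eq_mul_inv]
  rw [hexpUx]
  -- remaining algebra in Ca
  have hkey : Ca α ^ ((4 - α) / 2) * (2 * Real.pi / (2 - α))
      = 2 * (4 - α) / Ca α ^ 2 * Ca α ^ (α / 2) := by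
    have hC2 : (Ca α ^ 2 : ℝ) = Ca α ^ (2:ℝ) := by
      rw [← Real.rpow_natCast]; norm_num
    have e1 : Ca α ^ ((4 - α) / 2) * Ca α ^ (2:ℝ)
        = Ca α ^ (α / 2) * ((2 - α) * (4 - α) / Real.pi) := by
      rw [← Real.rpow_add hCa, ← hCapow, ← Real.rpow_add hCa]
      congr 1
      ring
    rw [div_mul_eq_mul_div, eq_div_iff (by positivity : Ca α ^ 2 ≠ (0:ℝ)), hC2]
    rw [show Ca α ^ ((4 - α) / 2) * (2 * Real.pi / (2 - α)) * Ca α ^ (2:ℝ)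
        = (Ca α ^ ((4 - α) / 2) * Ca α ^ (2:ℝ)) * (2 * Real.pi / (2 - α)) from by ring, e1]
    field_simp
  calc Ca α ^ ((4 - α) / 2) * (2 * Real.pi / (2 - α) * (1 + ‖x‖ ^ 2) ^ (-(α / 2)))
      = (Ca α ^ ((4 - α) / 2) * (2 * Real.pi / (2 - α))) * (1 + ‖x‖ ^ 2) ^ (-(α / 2)) := by ring
    _ = (2 * (4 - α) / Ca α ^ 2 * Ca α ^ (α / 2)) * (1 + ‖x‖ ^ 2) ^ (-(α / 2)) := by rw [hkey]
    _ = 2 * (4 - α) / Ca α ^ 2 * (Ca α ^ (α / 2) * (1 + ‖x‖ ^ 2) ^ (-(α / 2))) := by ring
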